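/- Let Ω ⊂ ℝ^d be a bounded set and let μ_1,…,μ_K ∈ Ω be centers with fill distance h = sup_{x∈Ω} min_{1≤k≤K} ‖x−μ_k‖ > 0 and separation radius q = (1/2) min_{i≠j} ‖μ_i−μ_j‖ satisfying h ≤ ρ q for a constant ρ ≥ 1. Let the weights satisfy 0 < w₋ ≤ w_k ≤ w₊ and let Σ_k be symmetric positive definite d×d matrices with c_Σ h² I ⪯ Σ_k ⪯ C_Σ h² I for constants 0 < c_Σ ≤ C_Σ. If f : ℝ^d → ℝ is Lipschitz on Ω with constant L (as holds, via Sobolev embedding, when f ∈ H^s with s > 1 + d/2), then there exists a constant C₁ depending only on d, ρ, c_Σ, C_Σ, w₋, w₊ such that sup_{x∈Ω} |f(x) − Σ_{k=1}^K ψ_k(x) f(μ_k)| ≤ C₁ L h. -/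

import Mathlib

open Matrix

open Matrix in
lemma psd_ineq {d : ℕ} {A : Matrix (Fin d) (Fin d) ℝ} (hA : A.PosSemidef) (u : Fin d → ℝ) :
    0 ≤ u ⬝ᵥ (A *ᵥ u) := by
  simpa using hA.dotProduct_mulVec_nonneg u

open Matrix in
lemma herm_sym {d : ℕ} {A : Matrix (Fin d) (Fin d) ℝ} (hA : A.IsHermitian)
    (u v : Fin d → ℝ) : u ⬝ᵥ (A *ᵥ v) = v ⬝ᵥ (A *ᵥ u) := by
  have hAt : Aᵀ = A := by
    have := hA.eq
    rwa [Matrix.conjTranspose_eq_transpose_of_trivial] at this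
  rw [Matrix.dotProduct_mulVec, ← Matrix.mulVec_transpose, hAt, dotProduct_comm]

open Matrix in
lemma cs_form {d : ℕ} {A : Matrix (Fin d) (Fin d) ℝ} (hA : A.PosSemidef)
    (u v : Fin d → ℝ) (hp : 0 < v ⬝ᵥ (A *ᵥ v) ∨ v = 0) :
    (u ⬝ᵥ (A *ᵥ v)) ^ 2 ≤ (u ⬝ᵥ (A *ᵥ u)) * (v ⬝ᵥ (A *ᵥ v)) := by
  rcases hp with hp | rfl
  · set p := v ⬝ᵥ (A *ᵥ v) with hpdef
    set c := u ⬝ᵥ (A *ᵥ v) with hcdef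
    set qq := u ⬝ᵥ (A *ᵥ u) with hqdef
    have hsym : v ⬝ᵥ (A *ᵥ u) = c := (herm_sym hA.1 u v).symm
    have h0 := psd_ineq hA (u + (-(c/p)) • v)
    have hexp : (u + (-(c/p)) • v) ⬝ᵥ (A *ᵥ (u + (-(c/p)) • v))
        = qq + (-(c/p)) * c + (-(c/p)) * c + (-(c/p))^2 * p := by
      rw [Matrix.mulVec_add, Matrix.mulVec_smul]
      simp only [dotProduct_add, add_dotProduct, smul_dotProduct,
        dotProduct_smul, smul_eq_mul, hsym]
      ring
    rw [hexp] at h0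
    have h1 : 0 ≤ qq - c^2/p := by
      have : (-(c/p)) * c + (-(c/p)) * c + (-(c/p))^2 * p = -(c^2/p) := by
        field_simp; ring
      nlinarith [this]
    have := mul_le_mul_of_nonneg_right h1 hp.le
    calc c^2 = (c^2/p) * p := by field_simp
    _ ≤ qq * p := by nlinarith
  · simp [Matrix.mulVec_zero]

open Matrix in
lemma qform_bounds {d : ℕ} {M : Matrix (Fin d) (Fin d) ℝ} (hM : M.PosDef) {a b : ℝ}
    (ha : 0 < a) (hb : 0 < b)
    (h1 : (M - a • 1).PosSemidef) (h2 : (b • 1 - M).PosSemidef) (v : Fin d → ℝ) :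
    (v ⬝ᵥ v) / b ≤ v ⬝ᵥ (M⁻¹ *ᵥ v) ∧ v ⬝ᵥ (M⁻¹ *ᵥ v) ≤ (v ⬝ᵥ v) / a := by
  have hdet : IsUnit M.det := hM.det_pos.ne'.isUnit
  set u := M⁻¹ *ᵥ v with hu
  have hMu : M *ᵥ u = v := by
    rw [hu, Matrix.mulVec_mulVec, Matrix.mul_nonsing_inv _ hdet, Matrix.one_mulVec]
  have hq_eq : v ⬝ᵥ (M⁻¹ *ᵥ v) = u ⬝ᵥ (M *ᵥ u) := by
    rw [hMu, ← hu, dotProduct_comm]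
  -- lower bounds from h1 : a (w⬝w) ≤ w M w
  have hlow : ∀ w : Fin d → ℝ, a * (w ⬝ᵥ w) ≤ w ⬝ᵥ (M *ᵥ w) := by
    intro w
    have := psd_ineq h1 w
    rw [Matrix.sub_mulVec, dotProduct_sub, Matrix.smul_mulVec,
      Matrix.one_mulVec, dotProduct_smul, smul_eq_mul] at this
    linarith
  have hupp : ∀ w : Fin d → ℝ, w ⬝ᵥ (M *ᵥ w) ≤ b * (w ⬝ᵥ w) := by
    intro w
    have := psd_ineq h2 w
    rw [Matrix.sub_mulVec, dotProduct_sub, Matrix.smul_mulVec,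
      Matrix.one_mulVec, dotProduct_smul, smul_eq_mul] at this
    linarith
  have hqnn : 0 ≤ u ⬝ᵥ (M *ᵥ u) := psd_ineq hM.posSemidef u
  set qq := u ⬝ᵥ (M *ᵥ u) with hqq
  have huu : 0 ≤ u ⬝ᵥ u := by
    simp only [dotProduct]
    exact Finset.sum_nonneg fun i _ => mul_self_nonneg _
  have hvv : 0 ≤ v ⬝ᵥ v := by
    simp only [dotProduct]
    exact Finset.sum_nonneg fun i _ => mul_self_nonneg _
  constructor
  · -- lower bound
    rw [hq_eq]
    by_cases hv0 : v ⬝ᵥ v = 0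
    · rw [hv0]; simpa using hqnn
    · have hvvpos : 0 < v ⬝ᵥ v := lt_of_le_of_ne hvv (Ne.symm hv0)
      have hvne : v ≠ 0 := by
        intro h; rw [h] at hv0; simp at hv0
      have hpv : 0 < v ⬝ᵥ (M *ᵥ v) := by
        have := hM.dotProduct_mulVec_pos hvne
        simpa using this
      have ht : v ⬝ᵥ v = u ⬝ᵥ (M *ᵥ v) := by
        rw [herm_sym hM.1 u v, hMu]
      have hcs := cs_form hM.posSemidef u v (Or.inl hpv)
      rw [← ht] at hcs
      have hbv : v ⬝ᵥ (M *ᵥ v) ≤ b * (v ⬝ᵥ v) := hupp v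
      -- (v⬝v)^2 ≤ qq * (b * (v⬝v))
      have h2' : (v ⬝ᵥ v)^2 ≤ qq * (b * (v ⬝ᵥ v)) := by nlinarith
      rw [div_le_iff₀ hb]
      nlinarith
  · -- upper bound
    rw [hq_eq]
    have hcs : (u ⬝ᵥ v)^2 ≤ (u ⬝ᵥ u) * (v ⬝ᵥ v) := by
      simp only [dotProduct]
      have h := Finset.sum_mul_sq_le_sq_mul_sq Finset.univ u v
      calc (∑ i, u i * v i)^2 ≤ (∑ i, u i ^ 2) * (∑ i, v i ^ 2) := h
      _ = (∑ i, u i * u i) * (∑ i, v i * v i) := by simp [sq]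
    have hqv : qq = u ⬝ᵥ v := by rw [hqq, hMu]
    have hl := hlow u
    by_cases ht0 : u ⬝ᵥ v ≤ 0
    · rw [hqv]
      exact le_trans ht0 (by positivity)
    · push_neg at ht0
      rw [hqv, le_div_iff₀ ha]
      rw [hMu] at hl
      nlinarith [mul_le_mul_of_nonneg_right hl hvv]

open MeasureTheory in
lemma packing_count {d K : ℕ} (hd : 0 < d) (μ : Fin K → EuclideanSpace ℝ (Fin d))
    {q : ℝ} (hq : 0 < q)
    (hsep : ∀ i j : Fin K, i ≠ j → 2 * q ≤ dist (μ i) (μ j))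
    (x : EuclideanSpace ℝ (Fin d)) {R : ℝ} (hR : 0 ≤ R) (s : Finset (Fin K))
    (hs : ∀ k ∈ s, dist x (μ k) ≤ R) :
    (s.card : ℝ) * q ^ d ≤ (R + q) ^ d := by
  haveI : Nonempty (Fin d) := ⟨⟨0, hd⟩⟩
  have hdisj : (s : Set (Fin K)).PairwiseDisjoint (fun k => Metric.ball (μ k) q) := by
    intro i _ j _ hij
    exact Metric.ball_disjoint_ball (by linarith [hsep i j hij])
  have hmeas : ∀ k ∈ s, MeasurableSet (Metric.ball (μ k) q) :=
    fun k _ => Metric.isOpen_ball.measurableSet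
  have hsum := measure_biUnion_finset hdisj hmeas (μ := volume)
  have hsub : (⋃ k ∈ s, Metric.ball (μ k) q) ⊆ Metric.ball x (R + q) := by
    intro y hy
    simp only [Set.mem_iUnion] at hy
    obtain ⟨k, hk, hyk⟩ := hy
    rw [Metric.mem_ball] at hyk ⊢
    calc dist y x ≤ dist y (μ k) + dist (μ k) x := dist_triangle _ _ _
    _ < q + R := by
        have := hs k hk
        rw [dist_comm] at this
        linarith
    _ = R + q := by ring
  have hle : ∑ k ∈ s, volume (Metric.ball (μ k) q) ≤ volume (Metric.ball x (R + q)) := by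
    rw [← hsum]; exact measure_mono hsub
  have hcard : Fintype.card (Fin d) = d := Fintype.card_fin d
  simp only [EuclideanSpace.volume_ball, hcard, Finset.sum_const, nsmul_eq_mul] at hle
  set c : ENNReal := ENNReal.ofReal (Real.sqrt Real.pi ^ d / Real.Gamma (d / 2 + 1)) with hc
  have hc0 : c ≠ 0 := by
    rw [hc, Ne, ENNReal.ofReal_eq_zero, not_le]
    have h1 : 0 < Real.sqrt Real.pi ^ d := by
      apply pow_pos
      exact Real.sqrt_pos.mpr Real.pi_pos
    have h2 : 0 < Real.Gamma ((d : ℝ) / 2 + 1) := Real.Gamma_pos_of_pos (by positivity)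
    positivity
  have hcT : c ≠ ⊤ := ENNReal.ofReal_ne_top
  rw [← mul_assoc] at hle
  have hle2 : (s.card : ENNReal) * ENNReal.ofReal q ^ d ≤ ENNReal.ofReal (R + q) ^ d :=
    (ENNReal.mul_le_mul_iff_left hc0 hcT).mp hle
  have hle3 : (s.card : ENNReal) * ENNReal.ofReal (q ^ d) ≤ ENNReal.ofReal ((R + q) ^ d) := by
    rwa [ENNReal.ofReal_pow hq.le, ENNReal.ofReal_pow (by linarith)]
  have hfin := ENNReal.toReal_mono (by simp) hle3
  rw [ENNReal.toReal_mul, ENNReal.toReal_ofReal (by positivity),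
    ENNReal.toReal_ofReal (by positivity)] at hfin
  simpa using hfin

lemma basel_bound (M : ℕ) : ∑ n ∈ Finset.range M, (1 : ℝ) / ((n : ℝ) + 1) ^ 2 ≤ 2 := by
  have key : ∀ M : ℕ, 0 < M → ∑ n ∈ Finset.range M, (1 : ℝ) / ((n : ℝ) + 1) ^ 2 ≤ 2 - 1 / (M : ℝ) := by
    intro M
    induction M with
    | zero => omega
    | succ M ih =>
      intro _
      rcases Nat.eq_zero_or_pos M with h0 | hpos
      · subst h0; norm_num
      · rw [Finset.sum_range_succ]
        have hM1 : (0 : ℝ) < (M : ℝ) := by exact_mod_cast hpos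
        have hM2 : (0 : ℝ) < (M : ℝ) + 1 := by positivity
        have step : (1 : ℝ) / ((M : ℝ) + 1) ^ 2 ≤ 1 / (M : ℝ) - 1 / ((M : ℝ) + 1) := by
          rw [div_sub_div _ _ (ne_of_gt hM1) (ne_of_gt hM2),
            div_le_div_iff₀ (by positivity) (by positivity)]
          nlinarith
        have ihh := ih hpos
        push_cast
        push_cast at ihh
        linarith
  rcases Nat.eq_zero_or_pos M with h0 | hpos
  · subst h0; simp
  · have hM1 : (0 : ℝ) < (M : ℝ) := by exact_mod_cast hpos
    have := one_div_pos.mpr hM1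
    linarith [key M hpos]

lemma poly_exp_bound {b : ℝ} (hb : 0 < b) (dd : ℕ) :
    ∃ A : ℝ, 1 ≤ A ∧ ∀ n : ℕ,
      ((n : ℝ) + 1) ^ (dd + 1) * Real.exp (-((n : ℝ) ^ 2 / (2 * b))) ≤ A / ((n : ℝ) + 1) ^ 2 := by
  set p := dd + 3 with hp
  refine ⟨max 1 (2 ^ p * (2 * b) ^ p * (p.factorial : ℝ)), le_max_left _ _, fun n => ?_⟩
  set A := max 1 (2 ^ p * (2 * b) ^ p * (p.factorial : ℝ)) with hA
  have hA1 : (1 : ℝ) ≤ A := le_max_left _ _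
  have ha : (0 : ℝ) < (n : ℝ) + 1 := by positivity
  set t := (n : ℝ) ^ 2 / (2 * b) with ht
  have htnn : 0 ≤ t := by positivity
  have key : ((n : ℝ) + 1) ^ p ≤ A * Real.exp t := by
    rcases Nat.eq_zero_or_pos n with h0 | hpos
    · subst h0
      simp only [Nat.cast_zero, zero_add, one_pow]
      have : Real.exp t ≥ 1 := Real.one_le_exp htnn
      nlinarith
    · have h1 : (1 : ℝ) ≤ (n : ℝ) := by exact_mod_cast hpos
      have e1 : ((n : ℝ) + 1) ^ p ≤ (2 * (n : ℝ)) ^ p :=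
        pow_le_pow_left₀ (by positivity) (by linarith) p
      have e2 : (2 * (n : ℝ)) ^ p = 2 ^ p * (n : ℝ) ^ p := mul_pow _ _ _
      have e3 : (n : ℝ) ^ p ≤ ((n : ℝ) ^ 2) ^ p :=
        pow_le_pow_left₀ (by positivity) (by nlinarith) p
      have e5 : t ^ p ≤ (p.factorial : ℝ) * Real.exp t := by
        have := Real.pow_div_factorial_le_exp t htnn p
        rw [div_le_iff₀ (by positivity : (0:ℝ) < (p.factorial : ℝ))] at this
        linarith
      have e4 : ((n : ℝ) ^ 2) ^ p = t ^ p * (2 * b) ^ p := by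
        rw [← mul_pow, ht]
        congr 1
        field_simp
      have e6 : ((n : ℝ) ^ 2) ^ p ≤ (2 * b) ^ p * (p.factorial : ℝ) * Real.exp t := by
        rw [e4]
        have h2b : (0:ℝ) ≤ (2*b)^p := by positivity
        nlinarith [Real.exp_pos t]
      have e7 : 2 ^ p * (2 * b) ^ p * (p.factorial : ℝ) ≤ A := le_max_right _ _
      have h2p : (0:ℝ) ≤ (2:ℝ)^p := by positivity
      calc ((n : ℝ) + 1) ^ p ≤ 2 ^ p * (n : ℝ) ^ p := by rw [← e2]; exact e1
      _ ≤ 2 ^ p * ((n : ℝ) ^ 2) ^ p := by nlinarith [pow_nonneg (by positivity : (0:ℝ) ≤ (n:ℝ)) p]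
      _ ≤ 2 ^ p * ((2 * b) ^ p * (p.factorial : ℝ) * Real.exp t) := by nlinarith [Real.exp_pos t]
      _ = (2 ^ p * (2 * b) ^ p * (p.factorial : ℝ)) * Real.exp t := by ring
      _ ≤ A * Real.exp t := by nlinarith [Real.exp_pos t]
  rw [Real.exp_neg, ← div_eq_mul_inv, div_le_div_iff₀ (Real.exp_pos t) (by positivity)]
  calc ((n : ℝ) + 1) ^ (dd + 1) * ((n : ℝ) + 1) ^ 2 = ((n : ℝ) + 1) ^ p := by
        rw [← pow_add]
  _ ≤ A * Real.exp t := key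

open Matrix in
lemma sum_gauss_tail {d K : ℕ} (hd : 0 < d) (μ : Fin K → EuclideanSpace ℝ (Fin d))
    (x : EuclideanSpace ℝ (Fin d)) {h q ρ b A : ℝ} (hh : 0 < h) (hq : 0 < q)
    (hρ : 1 ≤ ρ) (hhq : h ≤ ρ * q) (hb : 0 < b)
    (hsep : ∀ i j : Fin K, i ≠ j → 2 * q ≤ dist (μ i) (μ j))
    (hA1 : 1 ≤ A)
    (hA : ∀ n : ℕ, ((n : ℝ) + 1) ^ (d + 1) * Real.exp (-((n : ℝ) ^ 2 / (2 * b)))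
      ≤ A / ((n : ℝ) + 1) ^ 2) :
    ∑ k, ‖x - μ k‖ * Real.exp (-(1/2) * (‖x - μ k‖ ^ 2 / (b * h ^ 2)))
      ≤ (2 * ρ) ^ d * (2 * A) * h := by
  classical
  set r : Fin K → ℝ := fun k => ‖x - μ k‖ with hr
  set G : Fin K → ℝ := fun k => r k * Real.exp (-(1/2) * (r k ^ 2 / (b * h ^ 2))) with hG
  set nf : Fin K → ℕ := fun k => ⌊r k / h⌋₊ with hnf
  set M := (Finset.univ.sup nf) + 1 with hM
  have hmaps : ∀ k ∈ (Finset.univ : Finset (Fin K)), nf k ∈ Finset.range M := by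
    intro k _
    rw [Finset.mem_range, hM]
    exact Nat.lt_succ_of_le (Finset.le_sup (Finset.mem_univ k))
  have hfib := Finset.sum_fiberwise_of_maps_to hmaps G
  have fiber_bd : ∀ n ∈ Finset.range M,
      ∑ k ∈ Finset.univ.filter (fun k => nf k = n), G k
        ≤ (2 * ρ) ^ d * h * (A / ((n : ℝ) + 1) ^ 2) := by
    intro n _
    set s := Finset.univ.filter (fun k => nf k = n) with hs
    set Gb : ℝ := ((n : ℝ) + 1) * h * Real.exp (-((n : ℝ) ^ 2 / (2 * b))) with hGb
    have hGbnn : 0 ≤ Gb := by positivity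
    have hterm : ∀ k ∈ s, G k ≤ Gb := by
      intro k hk
      rw [hs, Finset.mem_filter] at hk
      have hkn : nf k = n := hk.2
      have hr0 : 0 ≤ r k := norm_nonneg _
      have hfl : (n : ℝ) ≤ r k / h := by
        rw [← hkn]
        exact_mod_cast Nat.floor_le (by positivity)
      have hfu : r k / h < (n : ℝ) + 1 := by
        rw [← hkn]
        exact_mod_cast Nat.lt_floor_add_one (r k / h)
      have hru : r k ≤ ((n : ℝ) + 1) * h := by
        rw [div_lt_iff₀ hh] at hfu
        linarith
      have hrl : (n : ℝ) * h ≤ r k := by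
        rw [le_div_iff₀ hh] at hfl
        linarith
      have hexp : Real.exp (-(1/2) * (r k ^ 2 / (b * h ^ 2)))
          ≤ Real.exp (-((n : ℝ) ^ 2 / (2 * b))) := by
        apply Real.exp_le_exp.mpr
        have hsq : (n : ℝ) ^ 2 * h ^ 2 ≤ r k ^ 2 := by
          have hmm := mul_le_mul hrl hrl (by positivity : (0:ℝ) ≤ (n:ℝ) * h) hr0
          nlinarith
        have : (n : ℝ) ^ 2 / (2 * b) ≤ r k ^ 2 / (2 * (b * h ^ 2)) := by
          rw [div_le_div_iff₀ (by positivity) (by positivity)]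
          nlinarith
        have heq : (1/2 : ℝ) * (r k ^ 2 / (b * h ^ 2)) = r k ^ 2 / (2 * (b * h ^ 2)) := by
          ring
        nlinarith [heq]
      calc G k = r k * Real.exp (-(1/2) * (r k ^ 2 / (b * h ^ 2))) := rfl
      _ ≤ (((n : ℝ) + 1) * h) * Real.exp (-((n : ℝ) ^ 2 / (2 * b))) :=
          mul_le_mul hru hexp (Real.exp_pos _).le (by positivity)
      _ = Gb := rfl
    have hsum_card := Finset.sum_le_card_nsmul s G Gb hterm
    rw [nsmul_eq_mul] at hsum_card
    have hcard : (s.card : ℝ) ≤ (2 * ρ) ^ d * ((n : ℝ) + 1) ^ d := by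
      have hR : (0 : ℝ) ≤ ((n : ℝ) + 1) * h := by positivity
      have hmem : ∀ k ∈ s, dist x (μ k) ≤ ((n : ℝ) + 1) * h := by
        intro k hk
        rw [dist_eq_norm]
        rw [hs, Finset.mem_filter] at hk
        have hkn2 : nf k = n := hk.2
        have hfu : r k / h < (n : ℝ) + 1 := by
          rw [← hkn2]
          exact_mod_cast Nat.lt_floor_add_one (r k / h)
        rw [div_lt_iff₀ hh] at hfu
        calc ‖x - μ k‖ = r k := rfl
        _ ≤ ((n : ℝ) + 1) * h := hfu.le
      have hpack := packing_count hd μ hq hsep x hR s hmem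
      have h1 : (s.card : ℝ) ≤ ((((n : ℝ) + 1) * h + q) / q) ^ d := by
        rw [div_pow, le_div_iff₀ (pow_pos hq d)]
        exact hpack
      have h2 : (((n : ℝ) + 1) * h + q) / q ≤ 2 * ρ * ((n : ℝ) + 1) := by
        rw [div_le_iff₀ hq]
        have hn0 : (0 : ℝ) ≤ (n : ℝ) := Nat.cast_nonneg n
        nlinarith [mul_le_mul_of_nonneg_left hhq (show (0:ℝ) ≤ (n:ℝ) + 1 by positivity)]
      calc (s.card : ℝ) ≤ ((((n : ℝ) + 1) * h + q) / q) ^ d := h1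
      _ ≤ (2 * ρ * ((n : ℝ) + 1)) ^ d := pow_le_pow_left₀ (by positivity) h2 d
      _ = (2 * ρ) ^ d * ((n : ℝ) + 1) ^ d := mul_pow _ _ _
    calc ∑ k ∈ s, G k ≤ (s.card : ℝ) * Gb := hsum_card
    _ ≤ ((2 * ρ) ^ d * ((n : ℝ) + 1) ^ d) * Gb := mul_le_mul_of_nonneg_right hcard hGbnn
    _ = (2 * ρ) ^ d * h * (((n : ℝ) + 1) ^ (d + 1) * Real.exp (-((n : ℝ) ^ 2 / (2 * b)))) := by
        rw [hGb, pow_succ]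
        ring
    _ ≤ (2 * ρ) ^ d * h * (A / ((n : ℝ) + 1) ^ 2) := by
        apply mul_le_mul_of_nonneg_left (hA n) (by positivity)
  calc ∑ k, G k = ∑ n ∈ Finset.range M, ∑ k ∈ Finset.univ.filter (fun k => nf k = n), G k :=
        hfib.symm
  _ ≤ ∑ n ∈ Finset.range M, (2 * ρ) ^ d * h * (A / ((n : ℝ) + 1) ^ 2) :=
        Finset.sum_le_sum fiber_bd
  _ = (2 * ρ) ^ d * h * A * ∑ n ∈ Finset.range M, (1 : ℝ) / ((n : ℝ) + 1) ^ 2 := by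
        rw [Finset.mul_sum]
        apply Finset.sum_congr rfl
        intro n _
        ring
  _ ≤ (2 * ρ) ^ d * h * A * 2 := by
        apply mul_le_mul_of_nonneg_left (basel_bound M) (by positivity)
  _ = (2 * ρ) ^ d * (2 * A) * h := by ring

open Matrix in
lemma double_sum_eq {d : ℕ} (M : Matrix (Fin d) (Fin d) ℝ) (v : Fin d → ℝ) :
    ∑ i, ∑ j, v i * M i j * v j = v ⬝ᵥ (M *ᵥ v) := by
  simp only [dotProduct, Matrix.mulVec, Finset.mul_sum]
  apply Finset.sum_congr rfl
  intro i _
  apply Finset.sum_congr rfl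
  intro j _
  ring

open Matrix in
lemma norm_sq_eq_dot {d : ℕ} (y : EuclideanSpace ℝ (Fin d)) :
    ‖y‖ ^ 2 = (fun i => y i) ⬝ᵥ (fun i => y i) := by
  rw [EuclideanSpace.norm_eq, Real.sq_sqrt (Finset.sum_nonneg fun i _ => by positivity)]
  simp only [dotProduct]
  apply Finset.sum_congr rfl
  intro i _
  rw [Real.norm_eq_abs, sq_abs, sq]



/-- The anisotropic Gaussian basis function
`φₖ(x) = exp(−(1/2)(x−μₖ)ᵀ Σₖ⁻¹ (x−μₖ))`. -/
noncomputable def gaussBasis {d K : ℕ} (S : Fin K → Matrix (Fin d) (Fin d) ℝ)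
    (μ : Fin K → EuclideanSpace ℝ (Fin d)) (k : Fin K)
    (x : EuclideanSpace ℝ (Fin d)) : ℝ :=
  Real.exp (-(1 / 2 : ℝ) * ∑ i, ∑ j, (x i - μ k i) * (S k)⁻¹ i j * (x j - μ k j))

/-- The normalized Shepard weight `ψₖ(x) = wₖ φₖ(x) / ∑ⱼ wⱼ φⱼ(x)`. -/
noncomputable def shepardWeight {d K : ℕ} (S : Fin K → Matrix (Fin d) (Fin d) ℝ)
    (μ : Fin K → EuclideanSpace ℝ (Fin d)) (w : Fin K → ℝ) (k : Fin K)
    (x : EuclideanSpace ℝ (Fin d)) : ℝ :=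
  w k * gaussBasis S μ k x / ∑ j, w j * gaussBasis S μ j x

/-- **first-order Shepard error for Lipschitz fields.** Under
quasi-uniformity, bounded weights and covariances comparable to `h²I`, for `f`
Lipschitz on `Ω` with constant `L`, the normalized Shepard approximant satisfies
`sup_{x∈Ω} |f(x) − ∑ₖ ψₖ(x) f(μₖ)| ≤ C₁ L h`, with `C₁` depending only on
`d, ρ, c_Σ, C_Σ, w₋, w₊`. -/
theorem shepard_lipschitz_error
    (d : ℕ) (ρ cSig CSig wlo whi : ℝ)
    (hρ : 1 ≤ ρ) (hcSig : 0 < cSig) (hcC : cSig ≤ CSig)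
    (hwlo : 0 < wlo) (hw : wlo ≤ whi) :
    ∃ C₁ : ℝ, ∀ (Ω : Set (EuclideanSpace ℝ (Fin d))), Bornology.IsBounded Ω →
      ∀ (K : ℕ) (μ : Fin K → EuclideanSpace ℝ (Fin d)) (h q : ℝ),
      (∀ k, μ k ∈ Ω) →
      h = ⨆ x : Ω, ⨅ k, ‖(x : EuclideanSpace ℝ (Fin d)) - μ k‖ →
      0 < h →
      q = (1 / 2) * ⨅ p : {p : Fin K × Fin K // p.1 ≠ p.2}, ‖μ p.val.1 - μ p.val.2‖ →
      h ≤ ρ * q →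
      ∀ (w : Fin K → ℝ) (S : Fin K → Matrix (Fin d) (Fin d) ℝ),
        (∀ k, wlo ≤ w k ∧ w k ≤ whi) →
        (∀ k, (S k).PosDef) →
        (∀ k, (S k - (cSig * h ^ 2) • 1).PosSemidef ∧
              ((CSig * h ^ 2) • 1 - S k).PosSemidef) →
        ∀ (f : EuclideanSpace ℝ (Fin d) → ℝ) (L : ℝ),
          (∀ x ∈ Ω, ∀ y ∈ Ω, |f x - f y| ≤ L * ‖x - y‖) →
          ∀ x ∈ Ω, |f x - ∑ k, shepardWeight S μ w k x * f (μ k)| ≤ C₁ * L * h := by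
  have hCSig : 0 < CSig := lt_of_lt_of_le hcSig hcC
  obtain ⟨A, hA1, hA⟩ := poly_exp_bound hCSig d
  set D₀ : ℝ := wlo * Real.exp (-(1 / (2 * cSig))) with hD₀def
  have hD₀pos : 0 < D₀ := by positivity
  refine ⟨(whi / D₀) * ((2 * ρ) ^ d * (2 * A)), ?_⟩
  intro Ω hΩ K μ h q hμΩ hhdef hh hqdef hhq w S hwb hSpd hSsand f L hLip x hx
  -- q is positive
  have hqpos : 0 < q := by
    by_contra hcon
    push_neg at hcon
    have : ρ * q ≤ 0 := mul_nonpos_of_nonneg_of_nonpos (by linarith) hcon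
    linarith
  -- Ω is nonempty
  have hΩne : Nonempty Ω := by
    by_contra hcon
    rw [not_nonempty_iff] at hcon
    rw [hhdef] at hh
    rw [Real.iSup_of_isEmpty] at hh
    linarith
  -- K is positive
  have hK : 0 < K := by
    rcases Nat.eq_zero_or_pos K with h0 | h0
    · exfalso
      subst h0
      have hz : ∀ xx : Ω, (⨅ k : Fin 0, ‖(xx : EuclideanSpace ℝ (Fin d)) - μ k‖) = 0 :=
        fun xx => Real.iInf_of_isEmpty _
      rw [hhdef] at hh
      have hzz : (⨆ xx : Ω, ⨅ k : Fin 0, ‖(xx : EuclideanSpace ℝ (Fin d)) - μ k‖) = 0 := by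
        rw [iSup_congr hz]
        exact ciSup_const
      rw [hzz] at hh
      linarith
    · exact h0
  haveI hKne : Nonempty (Fin K) := ⟨⟨0, hK⟩⟩
  -- d is positive
  have hd : 0 < d := by
    rcases Nat.eq_zero_or_pos d with h0 | h0
    · exfalso
      subst h0
      have hz : ∀ xx : Ω, (⨅ k, ‖(xx : EuclideanSpace ℝ (Fin 0)) - μ k‖) = 0 := by
        intro xx
        have he : ∀ k, ‖(xx : EuclideanSpace ℝ (Fin 0)) - μ k‖ = 0 := by
          intro k
          rw [show (xx : EuclideanSpace ℝ (Fin 0)) - μ k = 0 from Subsingleton.elim _ _,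
            norm_zero]
        simp only [he]
        exact ciInf_const
      rw [hhdef] at hh
      have : (⨆ xx : Ω, ⨅ k, ‖(xx : EuclideanSpace ℝ (Fin 0)) - μ k‖) = 0 := by
        rw [iSup_congr hz]
        exact ciSup_const
      linarith
    · exact h0
  -- separation of centers
  have hsep : ∀ i j : Fin K, i ≠ j → 2 * q ≤ dist (μ i) (μ j) := by
    intro i j hij
    rw [dist_eq_norm, hqdef]
    have hbdd : BddBelow (Set.range fun p : {p : Fin K × Fin K // p.1 ≠ p.2} =>
        ‖μ p.val.1 - μ p.val.2‖) := ⟨0, by rintro _ ⟨p, rfl⟩; exact norm_nonneg _⟩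
    have := ciInf_le hbdd ⟨(i, j), hij⟩
    linarith
  -- fill distance: some center within h of x
  obtain ⟨C, hC⟩ := Bornology.IsBounded.exists_norm_le hΩ
  have hbddA : BddAbove (Set.range fun xx : Ω => ⨅ k, ‖(xx : EuclideanSpace ℝ (Fin d)) - μ k‖) := by
    refine ⟨C + ‖μ ⟨0, hK⟩‖, ?_⟩
    rintro _ ⟨xx, rfl⟩
    have hbb : BddBelow (Set.range fun k => ‖(xx : EuclideanSpace ℝ (Fin d)) - μ k‖) :=
      ⟨0, by rintro _ ⟨k, rfl⟩; exact norm_nonneg _⟩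
    refine le_trans (ciInf_le hbb ⟨0, hK⟩) ?_
    calc ‖(xx : EuclideanSpace ℝ (Fin d)) - μ ⟨0, hK⟩‖
        ≤ ‖(xx : EuclideanSpace ℝ (Fin d))‖ + ‖μ ⟨0, hK⟩‖ := norm_sub_le _ _
    _ ≤ C + ‖μ ⟨0, hK⟩‖ := by
        have := hC _ xx.2
        linarith
  have hfill : ∃ k0 : Fin K, ‖x - μ k0‖ ≤ h := by
    obtain ⟨k0, hk0⟩ := exists_eq_ciInf_of_finite (f := fun k : Fin K => ‖x - μ k‖)
    refine ⟨k0, ?_⟩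
    rw [hk0, hhdef]
    exact le_ciSup hbddA (⟨x, hx⟩ : Ω)
  obtain ⟨k0, hk0⟩ := hfill
  -- L is nonnegative
  have hL : 0 ≤ L := by
    have hxpos : ∃ xx : Ω, 0 < ⨅ k, ‖(xx : EuclideanSpace ℝ (Fin d)) - μ k‖ := by
      by_contra hcon
      push_neg at hcon
      have := ciSup_le hcon
      rw [← hhdef] at this
      linarith
    obtain ⟨x0, hx0⟩ := hxpos
    have hbb : BddBelow (Set.range fun k => ‖(x0 : EuclideanSpace ℝ (Fin d)) - μ k‖) :=
      ⟨0, by rintro _ ⟨k, rfl⟩; exact norm_nonneg _⟩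
    have hx0k : 0 < ‖(x0 : EuclideanSpace ℝ (Fin d)) - μ ⟨0, hK⟩‖ :=
      lt_of_lt_of_le hx0 (ciInf_le hbb ⟨0, hK⟩)
    have hlip := hLip (x0 : EuclideanSpace ℝ (Fin d)) x0.2 (μ ⟨0, hK⟩) (hμΩ ⟨0, hK⟩)
    by_contra hcon
    push_neg at hcon
    have : L * ‖(x0 : EuclideanSpace ℝ (Fin d)) - μ ⟨0, hK⟩‖ < 0 :=
      mul_neg_of_neg_of_pos hcon hx0k
    have habs := abs_nonneg (f (x0 : EuclideanSpace ℝ (Fin d)) - f (μ ⟨0, hK⟩))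
    linarith
  -- Gaussian basis bounds
  have hgauss_pos : ∀ k, 0 < gaussBasis S μ k x := fun k => Real.exp_pos _
  have hqf : ∀ k : Fin K,
      gaussBasis S μ k x ≤ Real.exp (-(1/2) * (‖x - μ k‖ ^ 2 / (CSig * h ^ 2))) ∧
      (‖x - μ k‖ ≤ h → Real.exp (-(1 / (2 * cSig))) ≤ gaussBasis S μ k x) := by
    intro k
    set v : Fin d → ℝ := fun i => x i - μ k i with hv
    have hvdot : v ⬝ᵥ v = ‖x - μ k‖ ^ 2 := by
      rw [norm_sq_eq_dot]
      apply Finset.sum_congr rfl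
      intro i _
      simp [hv]
    obtain ⟨hs1, hs2⟩ := hSsand k
    have hbounds := qform_bounds (hSpd k) (by positivity : (0:ℝ) < cSig * h ^ 2)
      (by positivity : (0:ℝ) < CSig * h ^ 2) hs1 hs2 v
    have hgb : gaussBasis S μ k x = Real.exp (-(1/2 : ℝ) * (v ⬝ᵥ ((S k)⁻¹ *ᵥ v))) := by
      rw [gaussBasis, ← double_sum_eq]
    constructor
    · rw [hgb]
      apply Real.exp_le_exp.mpr
      have h1 := hbounds.1
      rw [hvdot] at h1
      nlinarith
    · intro hrk
      rw [hgb]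
      apply Real.exp_le_exp.mpr
      have h2 := hbounds.2
      rw [hvdot] at h2
      have hr2 : ‖x - μ k‖ ^ 2 ≤ h ^ 2 := by nlinarith [norm_nonneg (x - μ k)]
      have h3 : ‖x - μ k‖ ^ 2 / (cSig * h ^ 2) ≤ 1 / cSig := by
        rw [div_le_div_iff₀ (by positivity) (by positivity)]
        nlinarith
      have heq : -(1 / (2 * cSig)) = -(1/2 : ℝ) * (1 / cSig) := by ring
      rw [heq]
      nlinarith
  -- denominator lower bound
  set D : ℝ := ∑ j, w j * gaussBasis S μ j x with hD
  have hterm_nn : ∀ j : Fin K, 0 ≤ w j * gaussBasis S μ j x :=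
    fun j => mul_nonneg (le_trans hwlo.le (hwb j).1) (hgauss_pos j).le
  have hDlow : D₀ ≤ D := by
    have h1 : D₀ ≤ w k0 * gaussBasis S μ k0 x := by
      rw [hD₀def]
      have hgl := (hqf k0).2 hk0
      have hwk := (hwb k0).1
      calc wlo * Real.exp (-(1 / (2 * cSig))) ≤ wlo * gaussBasis S μ k0 x :=
            mul_le_mul_of_nonneg_left hgl hwlo.le
      _ ≤ w k0 * gaussBasis S μ k0 x :=
            mul_le_mul_of_nonneg_right hwk (hgauss_pos k0).le
    exact le_trans h1 (Finset.single_le_sum (fun j _ => hterm_nn j) (Finset.mem_univ k0))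
  have hDpos : 0 < D := lt_of_lt_of_le hD₀pos hDlow
  -- partition of unity
  have hψsum : ∑ k, shepardWeight S μ w k x = 1 := by
    simp only [shepardWeight, ← hD]
    rw [← Finset.sum_div, div_self (ne_of_gt hDpos)]
  have hψnn : ∀ k, 0 ≤ shepardWeight S μ w k x :=
    fun k => div_nonneg (hterm_nn k) hDpos.le
  -- error splitting
  have hsplit : f x - ∑ k, shepardWeight S μ w k x * f (μ k)
      = ∑ k, shepardWeight S μ w k x * (f x - f (μ k)) := by
    rw [Finset.sum_congr rfl (fun k _ => mul_sub (shepardWeight S μ w k x) (f x) (f (μ k))),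
      Finset.sum_sub_distrib, ← Finset.sum_mul, hψsum, one_mul]
  rw [hsplit]
  -- term bound
  have hterm_bd : ∀ k : Fin K, |shepardWeight S μ w k x * (f x - f (μ k))|
      ≤ L * (shepardWeight S μ w k x * ‖x - μ k‖) := by
    intro k
    rw [abs_mul, abs_of_nonneg (hψnn k)]
    have := hLip x hx (μ k) (hμΩ k)
    calc shepardWeight S μ w k x * |f x - f (μ k)|
        ≤ shepardWeight S μ w k x * (L * ‖x - μ k‖) :=
          mul_le_mul_of_nonneg_left this (hψnn k)
    _ = L * (shepardWeight S μ w k x * ‖x - μ k‖) := by ring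
  -- shepard weight times distance bound
  have hψr : ∀ k : Fin K, shepardWeight S μ w k x * ‖x - μ k‖
      ≤ (whi / D₀) * (‖x - μ k‖ * Real.exp (-(1/2) * (‖x - μ k‖ ^ 2 / (CSig * h ^ 2)))) := by
    intro k
    have hup := (hqf k).1
    have hwk := (hwb k).2
    have hrnn := norm_nonneg (x - μ k)
    have hg := hgauss_pos k
    have hψle : shepardWeight S μ w k x ≤ whi * gaussBasis S μ k x / D₀ := by
      rw [shepardWeight, ← hD]
      exact div_le_div₀ (mul_nonneg (lt_of_lt_of_le hwlo hw).le hg.le) (mul_le_mul_of_nonneg_right hwk hg.le) hD₀pos hDlow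
    calc shepardWeight S μ w k x * ‖x - μ k‖
        ≤ (whi * gaussBasis S μ k x / D₀) * ‖x - μ k‖ :=
          mul_le_mul_of_nonneg_right hψle hrnn
    _ = (whi / D₀) * (‖x - μ k‖ * gaussBasis S μ k x) := by ring
    _ ≤ (whi / D₀) * (‖x - μ k‖ * Real.exp (-(1/2) * (‖x - μ k‖ ^ 2 / (CSig * h ^ 2)))) := by
        apply mul_le_mul_of_nonneg_left (mul_le_mul_of_nonneg_left hup hrnn) (div_nonneg (lt_of_lt_of_le hwlo hw).le hD₀pos.le)
  -- final chain
  calc |∑ k, shepardWeight S μ w k x * (f x - f (μ k))|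
      ≤ ∑ k, |shepardWeight S μ w k x * (f x - f (μ k))| := Finset.abs_sum_le_sum_abs _ _
  _ ≤ ∑ k, L * (shepardWeight S μ w k x * ‖x - μ k‖) :=
      Finset.sum_le_sum (fun k _ => hterm_bd k)
  _ = L * ∑ k, shepardWeight S μ w k x * ‖x - μ k‖ := by rw [← Finset.mul_sum]
  _ ≤ L * ((whi / D₀) * ((2 * ρ) ^ d * (2 * A) * h)) := by
      apply mul_le_mul_of_nonneg_left _ hL
      calc ∑ k, shepardWeight S μ w k x * ‖x - μ k‖
          ≤ ∑ k, (whi / D₀) * (‖x - μ k‖ * Real.exp (-(1/2) * (‖x - μ k‖ ^ 2 / (CSig * h ^ 2)))) :=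
            Finset.sum_le_sum (fun k _ => hψr k)
      _ = (whi / D₀) * ∑ k, ‖x - μ k‖ * Real.exp (-(1/2) * (‖x - μ k‖ ^ 2 / (CSig * h ^ 2))) := by
            rw [← Finset.mul_sum]
      _ ≤ (whi / D₀) * ((2 * ρ) ^ d * (2 * A) * h) := by
            apply mul_le_mul_of_nonneg_left _ (div_nonneg (lt_of_lt_of_le hwlo hw).le hD₀pos.le)
            exact sum_gauss_tail hd μ x hh hqpos hρ hhq hCSig hsep hA1 hA
  _ = (whi / D₀) * ((2 * ρ) ^ d * (2 * A)) * L * h := by ring
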